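/- Let x : [0,∞) → ℝ be continuous and ε > 0. Let π_{εℤ} be the Lebesgue partition of x at levels εℤ, i.e. t_0 = 0 and t_{k+1} := inf{t > t_k : x_t ∈ εℤ, x_t ≠ x_{t_k}}. Then the discrete local time at level 0 satisfies |L^{π_{εℤ}}_t(0)/2 − ε·D^ε_t(0)| ≤ 2ε for all t, where D^ε_t(0) is the number of downcrossings of [0, ε] by (x_s)_{s≤t}. -/

import Mathlib

open Filter Set

/-- The discrete local time `L^π_t(u)`. -/
noncomputable def Ldisc (x : ℝ → ℝ) (π : ℕ → ℝ) (t u : ℝ) : ℝ :=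
  2 * ∑' j : ℕ,
    (Set.Ico (min (x (min (π j) t)) (x (min (π (j + 1)) t)))
             (max (x (min (π j) t)) (x (min (π (j + 1)) t)))).indicator
      (fun v => |x (min (π (j + 1)) t) - v|) u

/-- `π` is the Lebesgue partition of `x` at the levels `εℤ`: `t₀ = 0` and `t_{k+1}` is the
first time after `t_k` at which `x` hits a new point of `εℤ`. -/
def IsLebesgueZPartition (x : ℝ → ℝ) (ε : ℝ) (π : ℕ → ℝ) : Prop :=
  π 0 = 0 ∧ StrictMono π ∧ Tendsto π atTop atTop ∧
  (∀ k, (∃ m : ℤ, x (π (k + 1)) = ε * m) ∧ x (π (k + 1)) ≠ x (π k)) ∧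
  (∀ k s, π k < s → s < π (k + 1) → ¬((∃ m : ℤ, x s = ε * m) ∧ x s ≠ x (π k)))

/-- The number of downcrossings of `[u, u+ε]` by `(x_s)_{s≤t}`. -/
noncomputable def downcross (x : ℝ → ℝ) (u ε t : ℝ) : ℕ :=
  sSup {k : ℕ | ∃ a b : Fin k → ℝ,
    (∀ i, 0 ≤ a i) ∧ (∀ i, b i ≤ t) ∧ (∀ i, a i < b i) ∧
    (∀ i j, i < j → b i < a j) ∧
    (∀ i, x (a i) = u + ε) ∧ (∀ i, x (b i) = u)}

/-- The summand of the discrete local time at level `0`. -/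
noncomputable def Gterm (x : ℝ → ℝ) (π : ℕ → ℝ) (t : ℝ) (j : ℕ) : ℝ :=
  (Set.Ico (min (x (min (π j) t)) (x (min (π (j + 1)) t)))
           (max (x (min (π j) t)) (x (min (π (j + 1)) t)))).indicator
    (fun v => |x (min (π (j + 1)) t) - v|) 0

lemma Ldisc_eq (x : ℝ → ℝ) (π : ℕ → ℝ) (t : ℝ) :
    Ldisc x π t 0 = 2 * ∑' j, Gterm x π t j := rfl

/-- The set whose supremum is the downcrossing number at level `0`. -/
def Dset (x : ℝ → ℝ) (ε t : ℝ) : Set ℕ :=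
  {k | ∃ a b : Fin k → ℝ,
    (∀ i, 0 ≤ a i) ∧ (∀ i, b i ≤ t) ∧ (∀ i, a i < b i) ∧
    (∀ i j, i < j → b i < a j) ∧
    (∀ i, x (a i) = 0 + ε) ∧ (∀ i, x (b i) = 0)}

lemma downcross_eq (x : ℝ → ℝ) (ε t : ℝ) : downcross x 0 ε t = sSup (Dset x ε t) := rfl

section Aux

variable {x : ℝ → ℝ} {ε : ℝ} {π : ℕ → ℝ}

/-- Minimality of the Lebesgue partition: `x` cannot take a value in `εℤ` strictly between
its value at `π j` and at a point `s ≤ π (j+1)`. -/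
lemma aux_no_cross (hx : Continuous x)
    (hmin : ∀ k s, π k < s → s < π (k + 1) → ¬((∃ m : ℤ, x s = ε * m) ∧ x s ≠ x (π k)))
    (j : ℕ) {s L : ℝ} (hs1 : π j ≤ s) (hs2 : s ≤ π (j + 1))
    (hm : ∃ mm : ℤ, L = ε * mm)
    (hlo : min (x (π j)) (x s) < L) (hhi : L < max (x (π j)) (x s)) : False := by
  obtain ⟨mm, hmm⟩ := hm
  rcases le_total (x (π j)) (x s) with h | h
  · have hlo' : x (π j) < L := by simpa [min_eq_left h] using hlo
    have hhi' : L < x s := by simpa [max_eq_right h] using hhi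
    obtain ⟨u, hu, hxu⟩ := intermediate_value_Ioo hs1 hx.continuousOn ⟨hlo', hhi'⟩
    exact hmin j u hu.1 (lt_of_lt_of_le hu.2 hs2)
      ⟨⟨mm, by rw [hxu, hmm]⟩, by rw [hxu]; exact (ne_of_gt hlo')⟩
  · have hlo' : x s < L := by simpa [min_eq_right h] using hlo
    have hhi' : L < x (π j) := by simpa [max_eq_left h] using hhi
    obtain ⟨u, hu, hxu⟩ := intermediate_value_Ioo' hs1 hx.continuousOn ⟨hlo', hhi'⟩
    exact hmin j u hu.1 (lt_of_lt_of_le hu.2 hs2)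
      ⟨⟨mm, by rw [hxu, hmm]⟩, by rw [hxu]; exact (ne_of_lt hhi')⟩

/-- Classification of a full partition step contributing at level `0`. -/
lemma aux_classify (hx : Continuous x) (hε : 0 < ε)
    (hmono : StrictMono π)
    (hmin : ∀ k s, π k < s → s < π (k + 1) → ¬((∃ m : ℤ, x s = ε * m) ∧ x s ≠ x (π k)))
    (j : ℕ) (hB : ∃ m : ℤ, x (π (j + 1)) = ε * m)
    (h1 : min (x (π j)) (x (π (j + 1))) ≤ 0) (h2 : 0 < max (x (π j)) (x (π (j + 1)))) :
    x (π (j + 1)) = 0 ∨ (x (π j) = 0 ∧ x (π (j + 1)) = ε) := by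
  by_cases hB0 : x (π (j + 1)) = 0
  · exact Or.inl hB0
  right
  have hs1 : π j ≤ π (j + 1) := (hmono (Nat.lt_succ_self j)).le
  have hBpos : 0 < x (π (j + 1)) := by
    rcases lt_or_gt_of_ne hB0 with h | h
    · exact absurd (aux_no_cross hx hmin j hs1 le_rfl ⟨0, by ring⟩
        (lt_of_le_of_lt (min_le_right _ _) h) h2) not_false
    · exact h
  have hAle : x (π j) ≤ 0 := by
    rcases le_total (x (π j)) (x (π (j + 1))) with h | h
    · rwa [min_eq_left h] at h1
    · rw [min_eq_right h] at h1; linarith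
  have hA0 : x (π j) = 0 := by
    rcases eq_or_lt_of_le hAle with h | h
    · exact h
    · exact absurd (aux_no_cross hx hmin j hs1 le_rfl ⟨0, by ring⟩
        (lt_of_le_of_lt (min_le_left _ _) h)
        (lt_of_lt_of_le hBpos (le_max_right _ _))) not_false
  refine ⟨hA0, ?_⟩
  obtain ⟨m, hm⟩ := hB
  have hm0 : (0:ℤ) < m := by
    rcases mul_pos_iff.1 (hm ▸ hBpos) with ⟨_, h⟩ | ⟨h, _⟩
    · exact_mod_cast h
    · linarith
  rcases eq_or_lt_of_le (show (1:ℤ) ≤ m from hm0) with h | h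
  · rw [hm, ← h]; push_cast; ring
  · exfalso
    have hB2 : 2 * ε ≤ x (π (j + 1)) := by
      rw [hm]
      have : (2:ℝ) ≤ (m:ℝ) := by exact_mod_cast h
      nlinarith
    exact aux_no_cross hx hmin j hs1 le_rfl ⟨1, by ring⟩
      (lt_of_le_of_lt (min_le_left _ _) (by rw [hA0]; exact hε))
      (lt_of_lt_of_le (by linarith) (le_max_right _ _))

/-- The incomplete final step contributes at most `ε`. -/
lemma aux_boundary (hx : Continuous x) (hε : 0 < ε)
    (hmin : ∀ k s, π k < s → s < π (k + 1) → ¬((∃ m : ℤ, x s = ε * m) ∧ x s ≠ x (π k)))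
    (j : ℕ) {s : ℝ} (hs1 : π j ≤ s) (hs2 : s ≤ π (j + 1))
    (h1 : min (x (π j)) (x s) ≤ 0) (h2 : 0 < max (x (π j)) (x s)) : |x s| ≤ ε := by
  rw [abs_le]
  constructor
  · by_contra h; push_neg at h
    exact aux_no_cross hx hmin j hs1 hs2 (L := -ε) ⟨-1, by ring⟩
      (lt_of_le_of_lt (min_le_right _ _) (by linarith))
      (lt_trans (by linarith) h2)
  · by_contra h; push_neg at h
    exact aux_no_cross hx hmin j hs1 hs2 ⟨1, by ring⟩
      (lt_of_le_of_lt h1 hε)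
      (lt_of_lt_of_le h (le_max_right _ _))

/-- Between a zero of `x` and a later value `ε` there is a full upcrossing step of the
Lebesgue partition. -/
lemma aux_upcross (hx : Continuous x) (hε : 0 < ε) (hπ0 : π 0 = 0) (hmono : StrictMono π)
    (htop : Tendsto π atTop atTop)
    (hlev : ∀ k, (∃ m : ℤ, x (π (k + 1)) = ε * m) ∧ x (π (k + 1)) ≠ x (π k))
    (hmin : ∀ k s, π k < s → s < π (k + 1) → ¬((∃ m : ℤ, x s = ε * m) ∧ x s ≠ x (π k)))
    {s1 s2 : ℝ} (h01 : 0 ≤ s1) (h12 : s1 < s2) (hx1 : x s1 = 0) (hx2 : x s2 = ε) :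
    ∃ k, x (π k) = 0 ∧ x (π (k + 1)) = ε ∧ s1 < π (k + 1) ∧ π (k + 1) ≤ s2 := by
  have hne : ε ≠ 0 := hε.ne'
  set Z := Icc s1 s2 ∩ {s | x s = 0} with hZ
  have hZc : IsCompact Z := isCompact_Icc.inter_right (isClosed_eq hx continuous_const)
  have hZne : Z.Nonempty := ⟨s1, ⟨le_refl s1, h12.le⟩, hx1⟩
  set σ := sSup Z with hσ
  have hσZ : σ ∈ Z := hZc.sSup_mem hZne
  have hxσ : x σ = 0 := hσZ.2
  have hσ1 : s1 ≤ σ := hσZ.1.1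
  have hσ2 : σ ≤ s2 := hσZ.1.2
  have hσ2' : σ < s2 := lt_of_le_of_ne hσ2 (fun h => hne (by rw [← hx2, ← h, hxσ]))
  set E := Icc σ s2 ∩ {s | x s = ε} with hE
  have hEc : IsCompact E := isCompact_Icc.inter_right (isClosed_eq hx continuous_const)
  have hEne : E.Nonempty := ⟨s2, ⟨hσ2, le_refl _⟩, hx2⟩
  set τ := sInf E with hτ
  have hτE : τ ∈ E := hEc.sInf_mem hEne
  have hxτ : x τ = ε := hτE.2
  have hστ : σ < τ := lt_of_le_of_ne hτE.1.1 (fun h => hne (by rw [← hxτ, ← h, hxσ]))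
  have hτ2 : τ ≤ s2 := hτE.1.2
  have hint : ∀ u, σ < u → u < τ → 0 < x u ∧ x u < ε := by
    intro u hu1 hu2
    have huI : u ∈ Icc s1 s2 := ⟨hσ1.trans hu1.le, hu2.le.trans hτ2⟩
    have hu0 : x u ≠ 0 := fun h => absurd (le_csSup hZc.bddAbove ⟨huI, h⟩) (not_le.2 hu1)
    have huε : x u ≠ ε := fun h => absurd (csInf_le hEc.bddBelow ⟨⟨hu1.le, huI.2⟩, h⟩) (not_le.2 hu2)
    constructor
    · by_contra hc; push_neg at hc
      have hlt : x u < 0 := lt_of_le_of_ne hc hu0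
      obtain ⟨v, hv, hxv⟩ := intermediate_value_Icc hu2.le hx.continuousOn
        ⟨hlt.le, by rw [hxτ]; exact hε.le⟩
      have hvσ : v ≤ σ := le_csSup hZc.bddAbove ⟨⟨huI.1.trans hv.1, hv.2.trans hτ2⟩, hxv⟩
      have := hv.1
      linarith
    · by_contra hc; push_neg at hc
      have hlt : ε < x u := lt_of_le_of_ne hc (Ne.symm huε)
      obtain ⟨v, hv, hxv⟩ := intermediate_value_Icc hu1.le hx.continuousOn
        ⟨by rw [hxσ]; exact hε.le, hlt.le⟩
      have hvτ : τ ≤ v := csInf_le hEc.bddBelow ⟨⟨hv.1, hv.2.trans (hu2.le.trans hτ2)⟩, hxv⟩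
      have := hv.2
      linarith
  have hexK : ∃ j, σ < π j := (htop.eventually_gt_atTop σ).exists
  have hK0 : Nat.find hexK ≠ 0 := by
    intro h
    have h2 := Nat.find_spec hexK
    rw [h, hπ0] at h2
    linarith
  obtain ⟨k, hk⟩ := Nat.exists_eq_succ_of_ne_zero hK0
  have hπk : π k ≤ σ := not_lt.1 (Nat.find_min hexK (by omega))
  have hπk1 : σ < π (k + 1) := by
    have := Nat.find_spec hexK
    rwa [hk] at this
  have hxπk : x (π k) = 0 := by
    rcases eq_or_lt_of_le hπk with h | h
    · rw [h]; exact hxσ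
    · by_contra hne'
      exact hmin k σ h hπk1 ⟨⟨0, by rw [hxσ]; ring⟩, by rw [hxσ]; exact fun hh => hne' hh.symm⟩
  have hπk1τ : π (k + 1) ≤ τ := by
    by_contra h; push_neg at h
    exact hmin k τ (lt_of_le_of_lt hπk hστ) h
      ⟨⟨1, by rw [hxτ]; ring⟩, by rw [hxτ, hxπk]; exact hne⟩
  have hπk1x : x (π (k + 1)) = ε := by
    rcases eq_or_lt_of_le hπk1τ with h | h
    · rw [h]; exact hxτ
    · exfalso
      obtain ⟨m, hm⟩ := (hlev k).1
      obtain ⟨hp1, hp2⟩ := hint _ hπk1 h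
      rw [hm] at hp1 hp2
      have hm0 : (0:ℤ) < m := by
        rcases mul_pos_iff.1 hp1 with ⟨_, hh⟩ | ⟨hh, _⟩
        · exact_mod_cast hh
        · linarith
      have hm1 : (m:ℝ) < 1 := by
        by_contra hmc; push_neg at hmc; nlinarith
      have : (m:ℤ) < 1 := by exact_mod_cast hm1
      omega
  exact ⟨k, hxπk, hπk1x, lt_of_le_of_lt hσ1 hπk1, hπk1τ.trans hτ2⟩

end Aux

/-- Along the Lebesgue partition at levels `εℤ`, the discrete local time at level `0`
is within `2ε` of `ε` times the number of downcrossings of `[0,ε]`: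
`|L^{π_{εℤ}}_t(0)/2 − ε·D^ε_t(0)| ≤ 2ε`. -/
theorem Ldisc_levy_downcrossing
    (x : ℝ → ℝ) (ε : ℝ) (π : ℕ → ℝ)
    (hx : Continuous x) (hε : 0 < ε)
    (hπ : IsLebesgueZPartition x ε π) :
    ∀ t : ℝ, 0 ≤ t →
      |Ldisc x π t 0 / 2 - ε * (downcross x 0 ε t : ℝ)| ≤ 2 * ε := by
  obtain ⟨hπ0, hmono, htop, hlev, hmin⟩ := hπ
  intro t ht
  classical
  have hπnn : ∀ j, (0:ℝ) ≤ π j := fun j => hπ0 ▸ hmono.monotone (Nat.zero_le j)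
  have hD0mem : ∀ t' : ℝ, 0 ∈ Dset x ε t' := fun t' =>
    ⟨Fin.elim0, Fin.elim0, fun i => i.elim0, fun i => i.elim0, fun i => i.elim0,
     fun i _ _ => i.elim0, fun i => i.elim0, fun i => i.elim0⟩
  rcases eq_or_lt_of_le ht with h0 | h0
  · -- the case `t = 0`
    subst h0
    have hmin0 : ∀ j : ℕ, min (π j) (0:ℝ) = 0 := fun j => min_eq_right (hπnn j)
    have hG0 : ∀ j : ℕ, Gterm x π 0 j = 0 := by
      intro j
      unfold Gterm
      rw [hmin0 j, hmin0 (j + 1)]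
      simp
    have hts : Ldisc x π 0 0 = 0 := by
      rw [Ldisc_eq, tsum_congr hG0]
      simp
    have hdc : downcross x 0 ε 0 = 0 := by
      rw [downcross_eq]
      apply le_antisymm _ (Nat.zero_le _)
      apply csSup_le ⟨0, hD0mem 0⟩
      rintro k ⟨a, b, h0a, hbt, hab, -, -, -⟩
      by_contra hkk
      push_neg at hkk
      have h1 := lt_of_le_of_lt (h0a ⟨0, hkk⟩) (hab ⟨0, hkk⟩)
      have h2 := hbt ⟨0, hkk⟩
      linarith
    rw [hts, hdc]
    simp
    linarith
  · -- the case `0 < t`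
    have hex : ∃ j, t ≤ π j := (htop.eventually_ge_atTop t).exists
    set N := Nat.find hex with hN
    have hNlt : ∀ j, j < N → π j < t := fun j hj => not_le.1 (Nat.find_min hex hj)
    have hNge : ∀ j, N ≤ j → t ≤ π j := fun j hj => (Nat.find_spec hex).trans (hmono.monotone hj)
    have hN0 : N ≠ 0 := by
      intro h
      have h2 := Nat.find_spec hex
      rw [← hN, h, hπ0] at h2
      linarith
    obtain ⟨M, hMN⟩ := Nat.exists_eq_succ_of_ne_zero hN0
    -- the tsum reduces to a finite sum
    have hGzero : ∀ b, b ∉ Finset.range N → Gterm x π t b = 0 := by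
      intro b hb
      have hbN : N ≤ b := le_of_not_gt (fun h => hb (Finset.mem_range.2 h))
      have e1 : min (π b) t = t := min_eq_right (hNge b hbN)
      have e2 : min (π (b + 1)) t = t := min_eq_right (hNge (b + 1) (hbN.trans (Nat.le_succ b)))
      unfold Gterm
      rw [e1, e2]
      simp
    have htsum : ∑' j, Gterm x π t j = ∑ j ∈ Finset.range N, Gterm x π t j := tsum_eq_sum hGzero
    set Uset := (Finset.range M).filter (fun j => x (π j) = 0 ∧ x (π (j + 1)) = ε) with hUset
    set U := Uset.card with hU
    -- value of each full step
    have hterm : ∀ j ∈ Finset.range M,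
        Gterm x π t j = if x (π j) = 0 ∧ x (π (j + 1)) = ε then ε else 0 := by
      intro j hj
      have hjM := Finset.mem_range.1 hj
      have e1 : min (π j) t = π j := min_eq_left (hNlt j (by omega)).le
      have e2 : min (π (j + 1)) t = π (j + 1) := min_eq_left (hNlt (j + 1) (by omega)).le
      unfold Gterm
      rw [e1, e2]
      by_cases hmem :
          (0:ℝ) ∈ Set.Ico (min (x (π j)) (x (π (j + 1)))) (max (x (π j)) (x (π (j + 1))))
      · rw [Set.indicator_of_mem hmem]
        rw [Set.mem_Ico] at hmem
        rcases aux_classify hx hε hmono hmin j (hlev j).1 hmem.1 hmem.2 with hc | ⟨hc1, hc2⟩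
        · rw [if_neg, hc]
          · simp
          · rintro ⟨-, hc2⟩
            exact hε.ne' (hc2.symm.trans hc)
        · rw [if_pos ⟨hc1, hc2⟩, hc2]
          simp [abs_of_nonneg hε.le]
      · rw [Set.indicator_of_notMem hmem, if_neg]
        rintro ⟨hc1, hc2⟩
        apply hmem
        rw [hc1, hc2, Set.mem_Ico]
        constructor
        · exact min_le_left _ _
        · exact lt_max_of_lt_right hε
    have hsumM : ∑ j ∈ Finset.range M, Gterm x π t j = (U : ℝ) * ε := by
      rw [Finset.sum_congr rfl hterm, ← Finset.sum_filter, Finset.sum_const, nsmul_eq_mul]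
    -- the boundary term
    have hMt : π M < t := hNlt M (by omega)
    have htN : t ≤ π (M + 1) := hNge (M + 1) (by omega)
    have eM1 : min (π M) t = π M := min_eq_left hMt.le
    have eM2 : min (π (M + 1)) t = t := min_eq_right htN
    have hGM0 : 0 ≤ Gterm x π t M := Set.indicator_nonneg (fun v _ => abs_nonneg _) 0
    have hGMε : Gterm x π t M ≤ ε := by
      unfold Gterm
      rw [eM1, eM2]
      by_cases hmem : (0:ℝ) ∈ Set.Ico (min (x (π M)) (x t)) (max (x (π M)) (x t))
      · rw [Set.indicator_of_mem hmem]
        rw [Set.mem_Ico] at hmem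
        have := aux_boundary hx hε hmin M hMt.le htN hmem.1 hmem.2
        simpa using this
      · rw [Set.indicator_of_notMem hmem]
        exact hε.le
    -- upper bound for the downcrossing number
    have hDle : ∀ k ∈ Dset x ε t, k ≤ U + 1 := by
      rintro k ⟨a, b, h0a, hbt, hab, hord, hxa, hxb⟩
      rcases le_or_gt k 1 with hk | hk
      · omega
      have key : ∀ i : Fin (k - 1),
          ∃ jj, x (π jj) = 0 ∧ x (π (jj + 1)) = ε ∧
            b ⟨i.1, i.2.trans_le (Nat.sub_le k 1)⟩ < π (jj + 1) ∧
            π (jj + 1) ≤ a ⟨i.1 + 1, Nat.add_lt_of_lt_sub i.2⟩ := by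
        intro i
        apply aux_upcross hx hε hπ0 hmono htop hlev hmin
        · exact (h0a _).trans (hab _).le
        · exact hord _ _ (by simp [Fin.lt_def])
        · exact hxb _
        · exact (hxa _).trans (by rw [zero_add])
      choose g hg1 hg2 hg3 hg4 using key
      have hgmem : ∀ i, g i ∈ Uset := by
        intro i
        refine Finset.mem_filter.2 ⟨Finset.mem_range.2 ?_, hg1 i, hg2 i⟩
        have h1 : π (g i + 1) < t := lt_of_le_of_lt (hg4 i) (lt_of_lt_of_le (hab _) (hbt _))
        have h2 : g i + 1 < N := by
          by_contra hcon
          exact absurd (hNge _ (not_lt.1 hcon)) (not_le.2 h1)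
        omega
      have hgmono : StrictMono g := by
        intro i i' hii
        have hii' : i.1 < i'.1 := hii
        have hchain : π (g i + 1) < π (g i' + 1) := by
          have c1 : π (g i + 1) ≤ a ⟨i.1 + 1, Nat.add_lt_of_lt_sub i.2⟩ := hg4 i
          have c2 : a ⟨i.1 + 1, Nat.add_lt_of_lt_sub i.2⟩ <
              b ⟨i.1 + 1, Nat.add_lt_of_lt_sub i.2⟩ := hab _
          have c3 : b ⟨i.1 + 1, Nat.add_lt_of_lt_sub i.2⟩ ≤
              b ⟨i'.1, i'.2.trans_le (Nat.sub_le k 1)⟩ := by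
            rcases eq_or_lt_of_le (show i.1 + 1 ≤ i'.1 from hii') with h | h
            · exact le_of_eq (congrArg b (Fin.mk_eq_mk.2 h))
            · exact (lt_trans (hord _ _ (by simpa [Fin.lt_def] using h)) (hab _)).le
          have c4 : b ⟨i'.1, i'.2.trans_le (Nat.sub_le k 1)⟩ < π (g i' + 1) := hg3 i'
          linarith
        have := hmono.lt_iff_lt.1 hchain
        omega
      have hcard : k - 1 ≤ U := by
        have hinj : Function.Injective (fun i => (⟨g i, hgmem i⟩ : {y // y ∈ Uset})) := by
          intro i i' h
          exact hgmono.injective (congrArg Subtype.val h)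
        have := Fintype.card_le_of_injective _ hinj
        simpa using this
      omega
    have hDbdd : BddAbove (Dset x ε t) := ⟨U + 1, fun k hk => hDle k hk⟩
    have hDup : downcross x 0 ε t ≤ U + 1 := by
      rw [downcross_eq]
      exact csSup_le ⟨0, hD0mem t⟩ hDle
    -- lower bound for the downcrossing number
    have hUD : U ≤ downcross x 0 ε t + 1 := by
      rcases Nat.eq_zero_or_pos U with h | hUpos
      · omega
      have hUmem : U - 1 ∈ Dset x ε t := by
        have hcard : Uset.card = U := hU.symm
        set e := Uset.orderEmbOfFin hcard with he
        have hemem : ∀ v : Fin U, e v ∈ Uset := fun v => Finset.orderEmbOfFin_mem Uset hcard v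
        have hprop : ∀ v : Fin U, x (π (e v)) = 0 ∧ x (π (e v + 1)) = ε := fun v =>
          (Finset.mem_filter.1 (hemem v)).2
        have hrange : ∀ v : Fin U, (e v : ℕ) < M := fun v =>
          Finset.mem_range.1 (Finset.mem_filter.1 (hemem v)).1
        refine ⟨fun i => π (e ⟨i.1, i.2.trans_le (Nat.sub_le U 1)⟩ + 1),
                fun i => π (e ⟨i.1 + 1, Nat.add_lt_of_lt_sub i.2⟩), ?_, ?_, ?_, ?_, ?_, ?_⟩
        · intro i; exact hπnn _
        · intro i
          exact (hNlt _ (by have := hrange ⟨i.1 + 1, Nat.add_lt_of_lt_sub i.2⟩; omega)).le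
        · intro i
          have h1 : (e ⟨i.1, i.2.trans_le (Nat.sub_le U 1)⟩ : ℕ) <
              e ⟨i.1 + 1, Nat.add_lt_of_lt_sub i.2⟩ := e.strictMono (by simp [Fin.lt_def])
          have h2 : (e ⟨i.1, i.2.trans_le (Nat.sub_le U 1)⟩ : ℕ) + 1 ≠
              e ⟨i.1 + 1, Nat.add_lt_of_lt_sub i.2⟩ := by
            intro hcon
            have ha := (hprop ⟨i.1, i.2.trans_le (Nat.sub_le U 1)⟩).2
            have hb := (hprop ⟨i.1 + 1, Nat.add_lt_of_lt_sub i.2⟩).1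
            rw [hcon] at ha
            rw [ha] at hb
            exact hε.ne' hb
          exact hmono (by omega)
        · intro i j hij
          apply hmono
          have hij' : i.1 < j.1 := hij
          have : (e ⟨i.1 + 1, Nat.add_lt_of_lt_sub i.2⟩ : ℕ) ≤
              e ⟨j.1, j.2.trans_le (Nat.sub_le U 1)⟩ :=
            e.strictMono.monotone (by simp [Fin.le_def]; omega)
          omega
        · intro i; rw [zero_add]; exact (hprop _).2
        · intro i; exact (hprop _).1
      have hle := le_csSup hDbdd hUmem
      rw [← downcross_eq] at hle
      omega
    -- put everything together
    have hLd2 : Ldisc x π t 0 / 2 = (U : ℝ) * ε + Gterm x π t M := by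
      rw [Ldisc_eq, htsum, hMN, Finset.sum_range_succ, hsumM]
      ring
    rw [hLd2]
    have hc1 : (downcross x 0 ε t : ℝ) ≤ (U : ℝ) + 1 := by exact_mod_cast hDup
    have hc2 : (U : ℝ) ≤ (downcross x 0 ε t : ℝ) + 1 := by exact_mod_cast hUD
    have k1 : 0 ≤ ε * ((downcross x 0 ε t : ℝ) + 1 - U) := mul_nonneg hε.le (by linarith)
    have k2 : 0 ≤ ε * ((U : ℝ) + 1 - (downcross x 0 ε t : ℝ)) := mul_nonneg hε.le (by linarith)
    rw [abs_le]
    constructor <;> nlinarith [hGM0, hGMε, hε.le, k1, k2]
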